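/- Area law for graph states: Let G = (V, E) be a finite simple graph with |V| = N, and define the graph state vector ψ : (V → Fin 2) → ℂ by ψ(x) = 2^{−N/2} · (−1)^{q(x)}, where q(x) = ∑_{{u,v}∈E} x_u x_v (arithmetic in ℤ). Then ψ is a unit vector, and for every subset I ⊆ V, the reduced density matrix ρ_I of ψψ† on the sites in I satisfies S(ρ_I) ≤ |{{u, v} ∈ E : u ∈ I, v ∈ V∖I}|, i.e. the entanglement entropy in bits is at most the number of edges crossing the boundary between I and its complement. -/

import Mathlib

open scoped BigOperators
open Matrix

/-- The von Neumann entropy (in bits) of a matrix (junk value `0` if not Hermitian). -/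
noncomputable def vNEntropy {n : Type*} [Fintype n] [DecidableEq n]
    (ρ : Matrix n n ℂ) : ℝ :=
  if h : ρ.IsHermitian then -∑ i, h.eigenvalues i * Real.logb 2 (h.eigenvalues i) else 0

/-- The reduced density matrix (partial trace over the qubits outside `I`). -/
noncomputable def reduced {V : Type*} [Fintype V] [DecidableEq V] {d : ℕ} (I : Finset V)
    (ρ : Matrix (V → Fin d) (V → Fin d) ℂ) :
    Matrix ({i // i ∈ I} → Fin d) ({i // i ∈ I} → Fin d) ℂ :=
  fun x y => ∑ z : {i // i ∉ I} → Fin d,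
    ρ (fun i => if h : i ∈ I then x ⟨i, h⟩ else z ⟨i, h⟩)
      (fun i => if h : i ∈ I then y ⟨i, h⟩ else z ⟨i, h⟩)

namespace GAL

open Finset
open scoped ComplexOrder

/-! ### The quadratic character on `ZMod 2` -/

def chi (a : ZMod 2) : ℝ := if a = 0 then 1 else -1

lemma zmod2_cases (a : ZMod 2) : a = 0 ∨ a = 1 := by fin_cases a; exacts [Or.inl rfl, Or.inr rfl]

lemma chi_add (a b : ZMod 2) : chi (a + b) = chi a * chi b := by
  rcases zmod2_cases a with ha | ha <;> rcases zmod2_cases b with hb | hb <;>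
    subst ha <;> subst hb <;> norm_num [chi] <;> decide

lemma chi_add_one (a : ZMod 2) : chi (a + 1) = -chi a := by
  rcases zmod2_cases a with ha | ha <;> subst ha <;> norm_num [chi] <;> decide

lemma chi_intCast (n : ℤ) : ((-1 : ℝ)) ^ n = chi ((n : ZMod 2)) := by
  rcases Int.even_or_odd n with h | h
  · rw [h.neg_one_zpow]
    have : ((n : ZMod 2)) = 0 := by
      rw [ZMod.intCast_zmod_eq_zero_iff_dvd]
      exact_mod_cast h.two_dvd
    simp [chi, this]
  · rw [Odd.neg_one_zpow h]
    have : ((n : ZMod 2)) ≠ 0 := by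
      intro h0
      rw [ZMod.intCast_zmod_eq_zero_iff_dvd] at h0
      have hd := h0
      rw [← Int.not_even_iff_odd] at h
      exact h ⟨n / 2, by omega⟩
    simp [chi, this]

/-! ### Edge terms -/

variable {V : Type*} [Fintype V] [DecidableEq V]

def qd (f : V → ZMod 2) : Sym2 V → ZMod 2 :=
  Sym2.lift ⟨fun a b => f a * f b, fun a b => mul_comm _ _⟩
def bt (f g : V → ZMod 2) : Sym2 V → ZMod 2 :=
  Sym2.lift ⟨fun a b => f a * g b + g a * f b, by intros; ring⟩

lemma qd_add (f g : V → ZMod 2) (e : Sym2 V) :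
    qd (fun u => f u + g u) e = qd f e + qd g e + bt f g e := by
  induction e using Sym2.ind with
  | _ a b => simp only [qd, bt, Sym2.lift_mk]; ring

lemma bt_sum {ι : Type*} (s : Finset ι) (f : V → ZMod 2) (g : ι → V → ZMod 2) (e : Sym2 V) :
    bt f (fun u => ∑ i ∈ s, g i u) e = ∑ i ∈ s, bt f (g i) e := by
  induction e using Sym2.ind with
  | _ a b =>
    simp only [bt, Sym2.lift_mk, Finset.mul_sum, Finset.sum_mul, ← Finset.sum_add_distrib]

lemma bt_smul (c : ZMod 2) (f g : V → ZMod 2) (e : Sym2 V) :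
    bt f (fun u => c * g u) e = c * bt f g e := by
  induction e using Sym2.ind with
  | _ a b => simp only [bt, Sym2.lift_mk]; ring

variable (I : Finset V)

def ext2 (x : {i // i ∈ I} → Fin 2) : V → ZMod 2 :=
  fun u => if h : u ∈ I then ((x ⟨u, h⟩ : ℕ) : ZMod 2) else 0
def extC (z : {i // i ∉ I} → Fin 2) : V → ZMod 2 :=
  fun u => if h : u ∈ I then 0 else ((z ⟨u, h⟩ : ℕ) : ZMod 2)
def mrg (x : {i // i ∈ I} → Fin 2) (z : {i // i ∉ I} → Fin 2) : V → Fin 2 :=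
  fun i => if h : i ∈ I then x ⟨i, h⟩ else z ⟨i, h⟩
def ind2 (v : V) : V → ZMod 2 := fun u => if u = v then 1 else 0

lemma w2_mrg (x : {i // i ∈ I} → Fin 2) (z : {i // i ∉ I} → Fin 2) (u : V) :
    (((mrg I x z) u : ℕ) : ZMod 2) = ext2 I x u + extC I z u := by
  unfold mrg ext2 extC
  by_cases h : u ∈ I <;> simp [h]

lemma extC_eq_sum (z : {i // i ∉ I} → Fin 2) (u : V) :
    extC I z u = ∑ v : {i // i ∉ I}, ((z v : ℕ) : ZMod 2) * ind2 (↑v) u := by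
  unfold extC ind2
  by_cases h : u ∈ I
  · rw [dif_pos h]
    refine (Finset.sum_eq_zero fun v _ => ?_).symm
    have : u ≠ ↑v := fun he => v.2 (he ▸ h)
    simp [this]
  · rw [dif_neg h]
    rw [Fintype.sum_eq_single ⟨u, h⟩]
    · simp
    · intro v hv
      have : u ≠ ↑v := fun he => hv (Subtype.ext he.symm)
      simp [this]

lemma ext2_ne_zero {x : {i // i ∈ I} → Fin 2} {u : V} (h : ext2 I x u ≠ 0) : u ∈ I := by
  by_contra hu
  exact h (by simp [ext2, hu])

variable (G : SimpleGraph V) [DecidableRel G.Adj]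

def Amap (x : {i // i ∈ I} → Fin 2) : ZMod 2 := ∑ e ∈ G.edgeFinset, qd (ext2 I x) e
def Lmap (x : {i // i ∈ I} → Fin 2) : {i // i ∉ I} → ZMod 2 :=
  fun v => ∑ e ∈ G.edgeFinset, bt (ext2 I x) (ind2 (↑v)) e

lemma bt_extC (x : {i // i ∈ I} → Fin 2) (z : {i // i ∉ I} → Fin 2) :
    ∑ e ∈ G.edgeFinset, bt (ext2 I x) (extC I z) e
      = ∑ v : {i // i ∉ I}, Lmap I G x v * ((z v : ℕ) : ZMod 2) := by
  have h1 : ∀ e, bt (ext2 I x) (extC I z) e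
      = ∑ v : {i // i ∉ I}, ((z v : ℕ) : ZMod 2) * bt (ext2 I x) (ind2 (↑v)) e := by
    intro e
    have : extC I z = fun u => ∑ v : {i // i ∉ I}, ((z v : ℕ) : ZMod 2) * ind2 (↑v) u :=
      funext fun u => extC_eq_sum I z u
    rw [this, bt_sum]
    exact Finset.sum_congr rfl fun v _ => bt_smul _ _ _ _
  rw [Finset.sum_congr rfl fun e _ => h1 e, Finset.sum_comm]
  refine Finset.sum_congr rfl fun v _ => ?_
  rw [← Finset.mul_sum, mul_comm]
  rfl

/-- The key parity identity for the graph state phases. -/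
lemma key_parity (q : (V → Fin 2) → ℤ)
    (hq : ∀ x, q x = ∑ e ∈ G.edgeFinset,
      Sym2.lift ⟨fun u v => ((x u : ℕ) : ℤ) * ((x v : ℕ) : ℤ), fun u v => mul_comm _ _⟩ e)
    (x y : {i // i ∈ I} → Fin 2) (z : {i // i ∉ I} → Fin 2) :
    ((q (mrg I x z) + q (mrg I y z) : ℤ) : ZMod 2)
      = Amap I G x + Amap I G y
        + ∑ v : {i // i ∉ I}, (Lmap I G x v + Lmap I G y v) * ((z v : ℕ) : ZMod 2) := by
  have hQ : ∀ w : V → Fin 2, ((q w : ℤ) : ZMod 2)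
      = ∑ e ∈ G.edgeFinset, qd (fun u => ((w u : ℕ) : ZMod 2)) e := by
    intro w
    rw [hq w]
    push_cast
    refine Finset.sum_congr rfl fun e _ => ?_
    induction e using Sym2.ind with
    | _ a b => simp [qd, Sym2.lift_mk]
  have hm : ∀ (x : {i // i ∈ I} → Fin 2) z, ((q (mrg I x z) : ℤ) : ZMod 2)
      = Amap I G x + (∑ v : {i // i ∉ I}, Lmap I G x v * ((z v : ℕ) : ZMod 2))
        + ∑ e ∈ G.edgeFinset, qd (extC I z) e := by
    intro x z
    rw [hQ]
    have : ∀ e, qd (fun u => (((mrg I x z) u : ℕ) : ZMod 2)) e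
        = qd (ext2 I x) e + qd (extC I z) e + bt (ext2 I x) (extC I z) e := by
      intro e
      rw [show (fun u => (((mrg I x z) u : ℕ) : ZMod 2))
          = fun u => ext2 I x u + extC I z u from funext (w2_mrg I x z)]
      exact qd_add _ _ _
    rw [Finset.sum_congr rfl fun e _ => this e]
    rw [Finset.sum_add_distrib, Finset.sum_add_distrib, bt_extC]
    unfold Amap
    ring
  push_cast
  rw [hm x z, hm y z]
  have hcancel : ∀ a : ZMod 2, a + a = 0 := by decide
  have h2 := hcancel (∑ e ∈ G.edgeFinset, qd (extC I z) e)
  have h3 : (∑ v : {i // i ∉ I}, (Lmap I G x v + Lmap I G y v) * ((z v : ℕ) : ZMod 2))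
      = (∑ v : {i // i ∉ I}, Lmap I G x v * ((z v : ℕ) : ZMod 2))
        + ∑ v : {i // i ∉ I}, Lmap I G y v * ((z v : ℕ) : ZMod 2) := by
    rw [← Finset.sum_add_distrib]
    exact Finset.sum_congr rfl fun v _ => add_mul _ _ _
  rw [h3]
  linear_combination h2

/-! ### Evaluating the character sums -/

def rev : Fin 2 → Fin 2 := fun t => if t = 0 then 1 else 0

lemma zc_rev (t : Fin 2) : ((rev t : ℕ) : ZMod 2) = ((t : ℕ) : ZMod 2) + 1 := by
  fin_cases t <;> decide

lemma rev_ne (t : Fin 2) : rev t ≠ t := by fin_cases t <;> decide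
lemma rev_rev (t : Fin 2) : rev (rev t) = t := by fin_cases t <;> decide

lemma sum_chi_eq (c : ZMod 2) (d : {i // i ∉ I} → ZMod 2) :
    ∑ z : {i // i ∉ I} → Fin 2, chi (c + ∑ v, d v * ((z v : ℕ) : ZMod 2)) =
      if d = 0 then (2 : ℝ) ^ (Fintype.card {i // i ∉ I}) * chi c else 0 := by
  by_cases hd : d = 0
  · subst hd
    simp only [Pi.zero_apply, zero_mul, Finset.sum_const_zero, add_zero, if_true]
    rw [Finset.sum_const, Finset.card_univ, Fintype.card_fun, Fintype.card_fin]
    simp [nsmul_eq_mul, mul_comm]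
  · rw [if_neg hd]
    obtain ⟨v₀, hv₀⟩ := Function.ne_iff.mp hd
    have hd1 : d v₀ = 1 := (zmod2_cases (d v₀)).resolve_left hv₀
    apply Finset.sum_ninvolution (fun z => Function.update z v₀ (rev (z v₀)))
    · intro z
      have hS : ∑ v, d v * ((Function.update z v₀ (rev (z v₀)) v : ℕ) : ZMod 2)
          = (∑ v, d v * ((z v : ℕ) : ZMod 2)) + 1 := by
        have h1 : ∀ v : {i // i ∉ I}, d v * ((Function.update z v₀ (rev (z v₀)) v : ℕ) : ZMod 2)
            = d v * ((z v : ℕ) : ZMod 2) + (if v = v₀ then 1 else 0) := by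
          intro v
          by_cases hv : v = v₀
          · subst hv
            rw [Function.update_self, zc_rev, hd1, if_pos rfl]; ring
          · rw [Function.update_of_ne hv, if_neg hv, add_zero]
        rw [Finset.sum_congr rfl (fun v _ => h1 v), Finset.sum_add_distrib]
        simp
      rw [hS, ← add_assoc, chi_add_one]
      ring
    · intro z _
      intro h
      have := congrFun h v₀
      rw [Function.update_self] at this
      exact rev_ne (z v₀) this
    · intro z; exact Finset.mem_univ _
    · intro z
      funext v
      by_cases hv : v = v₀
      · subst hv; simp [Function.update_self, rev_rev]
      · simp [Function.update_of_ne hv]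

/-! ### The cross-edge bound on the image of `Lmap` -/

open scoped Classical in
lemma card_Lmap_le :
    (Finset.image (Lmap I G) Finset.univ).card
      ≤ 2 ^ (G.edgeFinset.filter fun e => ∃ u v, u ∈ I ∧ v ∉ I ∧ e = s(u, v)).card := by
  set Ecr := G.edgeFinset.filter fun e => ∃ u v, u ∈ I ∧ v ∉ I ∧ e = s(u, v) with hEcr
  set F : ({i // i ∈ I} → Fin 2) → Sym2 V → ZMod 2 := fun x =>
    Sym2.lift ⟨fun a b => ext2 I x a + ext2 I x b, fun a b => add_comm _ _⟩ with hF
  set g : ({e // e ∈ Ecr} → ZMod 2) → ({i // i ∉ I} → ZMod 2) := fun t v =>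
    ∑ e : {e // e ∈ Ecr}, if (↑v : V) ∈ (e : Sym2 V) then t e else 0 with hg
  have hLg : ∀ x, Lmap I G x = g (fun e => F x ↑e) := by
    intro x
    funext v
    have hXv : ext2 I x (↑v : V) = 0 := by simp [ext2, v.2]
    have step1 : ∀ e : Sym2 V, bt (ext2 I x) (ind2 (↑v)) e
        = if (↑v : V) ∈ e then F x e else 0 := by
      intro e
      induction e using Sym2.ind with
      | _ a b =>
        have hor : ((↑v : V) ∈ s(a, b)) ↔ (a = ↑v ∨ b = ↑v) := by
          rw [Sym2.mem_iff]; constructor <;> rintro (h | h) <;> simp [h]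
        by_cases ha : a = ↑v <;> by_cases hb : b = ↑v
        · rw [if_pos (hor.mpr (Or.inl ha))]; subst ha; subst hb
          simp [bt, hF, ind2, Sym2.lift_mk, hXv]
        · rw [if_pos (hor.mpr (Or.inl ha))]; subst ha
          simp [bt, hF, ind2, Sym2.lift_mk, hXv, hb]
        · rw [if_pos (hor.mpr (Or.inr hb))]; subst hb
          simp [bt, hF, ind2, Sym2.lift_mk, hXv, ha]
        · rw [if_neg (fun h => by rcases hor.mp h with h | h; exacts [ha h, hb h])]
          simp [bt, ind2, Sym2.lift_mk, ha, hb]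
    have step2 : Lmap I G x v = ∑ e ∈ G.edgeFinset, if (↑v : V) ∈ e then F x e else 0 :=
      Finset.sum_congr rfl fun e _ => step1 e
    have step3 : (∑ e ∈ Ecr, if (↑v : V) ∈ e then F x e else 0)
        = ∑ e ∈ G.edgeFinset, if (↑v : V) ∈ e then F x e else 0 := by
      apply Finset.sum_subset (Finset.filter_subset _ _)
      intro e he hne
      by_cases hm : (↑v : V) ∈ e
      · rw [if_pos hm]
        induction e using Sym2.ind with
        | _ a b =>
          rw [Sym2.mem_iff] at hm
          rcases hm with hm | hm
          · subst hm
            simp only [hF, Sym2.lift_mk, hXv, zero_add]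
            by_contra hb0
            exact hne (Finset.mem_filter.mpr ⟨he, b, ↑v, ext2_ne_zero I hb0, v.2, Sym2.eq_swap⟩)
          · subst hm
            simp only [hF, Sym2.lift_mk, hXv, add_zero]
            by_contra ha0
            exact hne (Finset.mem_filter.mpr ⟨he, a, ↑v, ext2_ne_zero I ha0, v.2, rfl⟩)
      · rw [if_neg hm]
    have step4 : g (fun e => F x ↑e) v = ∑ e ∈ Ecr, if (↑v : V) ∈ e then F x e else 0 := by
      rw [hg]
      exact Finset.sum_coe_sort Ecr (fun e => if (↑v : V) ∈ e then F x e else 0)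
    rw [step2, step4, step3]
  calc (Finset.image (Lmap I G) Finset.univ).card
      ≤ (Finset.image g Finset.univ).card := by
        apply Finset.card_le_card
        intro c hc
        rw [Finset.mem_image] at hc ⊢
        obtain ⟨x, _, hx⟩ := hc
        exact ⟨fun e => F x ↑e, Finset.mem_univ _, by rw [← hLg x, hx]⟩
    _ ≤ Fintype.card ({e // e ∈ Ecr} → ZMod 2) := by
        refine (Finset.card_image_le).trans ?_
        simp [Finset.card_univ]
    _ = 2 ^ Ecr.card := by
        rw [Fintype.card_fun, Fintype.card_coe, ZMod.card]

end GAL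

/-! ### General spectral facts -/

section Spectral
open scoped ComplexOrder

lemma GAL.cast_sum_eig {n : Type*} [Fintype n] [DecidableEq n] {ρ : Matrix n n ℂ}
    (h : ρ.IsHermitian) : ((∑ i, h.eigenvalues i : ℝ) : ℂ) = ρ.trace := by
  rw [h.trace_eq_sum_eigenvalues]
  push_cast
  rfl

lemma GAL.entropy_le_logb {n : Type*} [Fintype n] [DecidableEq n] {ρ : Matrix n n ℂ}
    (hρ : ρ.PosSemidef) (htr : ∑ i, hρ.1.eigenvalues i = 1)
    {r : ℕ} (hr : ρ.rank ≤ r) (hr1 : 1 ≤ r) :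
    vNEntropy ρ ≤ Real.logb 2 r := by
  classical
  rw [vNEntropy, dif_pos hρ.1]
  set lam := hρ.1.eigenvalues with hlam
  set t : Finset n := Finset.univ.filter (fun i => lam i ≠ 0) with ht
  have hnonneg : ∀ i, 0 ≤ lam i := hρ.eigenvalues_nonneg
  have hpos : ∀ i ∈ t, 0 < lam i := by
    intro i hi
    rw [ht, Finset.mem_filter] at hi
    exact lt_of_le_of_ne (hnonneg i) (Ne.symm hi.2)
  have hcard : t.card ≤ r := by
    have : t.card = Fintype.card {i // lam i ≠ 0} := (Fintype.card_subtype _).symm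
    rw [this, ← hρ.1.rank_eq_card_non_zero_eigs]
    exact hr
  have hsum1 : ∑ i ∈ t, lam i = 1 := by
    rw [ht, Finset.sum_filter_ne_zero]; exact htr
  have hE : -∑ i, lam i * Real.logb 2 (lam i)
      = ∑ i ∈ t, lam i * Real.log (lam i)⁻¹ / Real.log 2 := by
    rw [← Finset.sum_filter_of_ne (p := fun i => lam i ≠ 0)
      (fun i _ h h0 => h (by rw [h0, zero_mul]))]
    rw [← Finset.sum_neg_distrib]
    refine Finset.sum_congr rfl fun i hi => ?_
    rw [Real.logb, Real.log_inv]
    ring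
  rw [hE]
  by_cases hte : t = ∅
  · rw [hte]
    simp only [Finset.sum_empty]
    apply Real.logb_nonneg one_lt_two
    exact_mod_cast hr1
  · have htpos : 0 < t.card := Finset.card_pos.mpr (Finset.nonempty_of_ne_empty hte)
    have jensen : ∑ i ∈ t, lam i * Real.log (lam i)⁻¹ ≤ Real.log t.card := by
      have := (strictConcaveOn_log_Ioi.concaveOn).le_map_sum
        (t := t) (w := lam) (p := fun i => (lam i)⁻¹)
        (fun i hi => hnonneg i) hsum1
        (fun i hi => Set.mem_Ioi.mpr (inv_pos.mpr (hpos i hi)))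
      simp only [smul_eq_mul] at this
      refine this.trans_eq ?_
      congr 1
      rw [Finset.sum_congr rfl fun i hi => mul_inv_cancel₀ (ne_of_gt (hpos i hi))]
      simp
    have hlog2 : (0:ℝ) < Real.log 2 := Real.log_pos one_lt_two
    calc ∑ i ∈ t, lam i * Real.log (lam i)⁻¹ / Real.log 2
        = (∑ i ∈ t, lam i * Real.log (lam i)⁻¹) / Real.log 2 := by
          rw [Finset.sum_div]
      _ ≤ Real.log t.card / Real.log 2 := by gcongr
      _ = Real.logb 2 t.card := rfl
      _ ≤ Real.logb 2 r := by
          apply Real.logb_le_logb_of_le one_lt_two (by exact_mod_cast htpos)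
          exact_mod_cast hcard

end Spectral

open GAL
open scoped ComplexOrder

open scoped Classical in
/-- **Area law for graph states.** For a finite simple graph `G = (V, E)` on `N` vertices,
the graph state `ψ(x) = 2^{−N/2}·(−1)^{q(x)}`, `q(x) = ∑_{{u,v}∈E} x_u x_v`, is a unit
vector and for every `I ⊆ V` the entanglement entropy of the reduction to `I` is at most
the number of edges crossing between `I` and its complement. -/
theorem graph_state_area_law {V : Type*} [Fintype V] [DecidableEq V]
    (G : SimpleGraph V) [DecidableRel G.Adj]
    (N : ℕ) (hN : N = Fintype.card V)
    (q : (V → Fin 2) → ℤ)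
    (hq : ∀ x, q x = ∑ e ∈ G.edgeFinset,
      Sym2.lift ⟨fun u v => ((x u : ℕ) : ℤ) * ((x v : ℕ) : ℤ),
        fun u v => mul_comm _ _⟩ e)
    (ψ : (V → Fin 2) → ℂ)
    (hψ : ∀ x, ψ x = (((2 : ℝ) ^ (-(N : ℝ) / 2) * (-1 : ℝ) ^ (q x) : ℝ) : ℂ)) :
    (∑ x, ‖ψ x‖ ^ 2 = 1) ∧
    ∀ I : Finset V,
      vNEntropy (reduced I (Matrix.of fun x y => ψ x * starRingEnd ℂ (ψ y))) ≤
        ((G.edgeFinset.filter fun e => ∃ u v, u ∈ I ∧ v ∉ I ∧ e = s(u, v)).card : ℝ) := by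
  have habs : ∀ x : V → Fin 2, ‖ψ x‖ ^ 2 = (2 : ℝ) ^ (-(N : ℝ)) := by
    intro x
    rw [hψ x, Complex.norm_real, Real.norm_eq_abs, sq_abs, mul_pow]
    have h1 : ((-1 : ℝ) ^ (q x)) ^ 2 = 1 := by
      rcases Int.even_or_odd (q x) with h | h
      · rw [h.neg_one_zpow]; norm_num
      · rw [Odd.neg_one_zpow h]; norm_num
    rw [h1, mul_one, ← Real.rpow_natCast ((2 : ℝ) ^ (-(N : ℝ) / 2)) 2,
      ← Real.rpow_mul (by norm_num)]
    norm_num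
  have hunit : ∑ x, ‖ψ x‖ ^ 2 = 1 := by
    rw [Finset.sum_congr rfl fun x _ => habs x, Finset.sum_const, Finset.card_univ,
      Fintype.card_fun, Fintype.card_fin, nsmul_eq_mul]
    push_cast
    rw [← Real.rpow_natCast 2 (Fintype.card V), ← Real.rpow_add two_pos, ← hN]
    norm_num
  refine ⟨hunit, ?_⟩
  intro I
  set M := reduced I (Matrix.of fun x y => ψ x * starRingEnd ℂ (ψ y)) with hMdef
  set K : ℝ := (2 : ℝ) ^ (-(N : ℝ)) * (2 : ℝ) ^ (Fintype.card {i // i ∉ I}) with hK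
  have hKpos : 0 < K := mul_pos (Real.rpow_pos_of_pos two_pos _) (by positivity)
  -- the key entry formula
  have hMxy : ∀ x y, M x y = ((K * (chi (Amap I G x) * chi (Amap I G y))
      * (if Lmap I G x = Lmap I G y then 1 else 0) : ℝ) : ℂ) := by
    intro x y
    have h0 : M x y = ∑ z : {i // i ∉ I} → Fin 2,
        ψ (mrg I x z) * (starRingEnd ℂ) (ψ (mrg I y z)) := rfl
    rw [h0]
    have h1 : ∀ z, ψ (mrg I x z) * (starRingEnd ℂ) (ψ (mrg I y z))
        = (((2 : ℝ) ^ (-(N : ℝ)) *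
            chi (((q (mrg I x z) + q (mrg I y z) : ℤ) : ZMod 2)) : ℝ) : ℂ) := by
      intro z
      rw [hψ, hψ, Complex.conj_ofReal, ← Complex.ofReal_mul]
      congr 1
      have e3 : ((q (mrg I x z) + q (mrg I y z) : ℤ) : ZMod 2)
          = ((q (mrg I x z) : ℤ) : ZMod 2) + ((q (mrg I y z) : ℤ) : ZMod 2) := by push_cast; ring
      rw [e3, chi_add, ← chi_intCast, ← chi_intCast]
      have e4 : (2 : ℝ) ^ (-(N : ℝ)) = (2 : ℝ) ^ (-(N : ℝ) / 2) * (2 : ℝ) ^ (-(N : ℝ) / 2) := by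
        rw [← Real.rpow_add two_pos]; ring_nf
      rw [e4]; ring
    rw [Finset.sum_congr rfl fun z _ => h1 z, ← Complex.ofReal_sum]
    congr 1
    rw [← Finset.mul_sum]
    have h2 : ∀ z : {i // i ∉ I} → Fin 2,
        chi (((q (mrg I x z) + q (mrg I y z) : ℤ) : ZMod 2))
        = chi ((Amap I G x + Amap I G y)
            + ∑ v, (Lmap I G x v + Lmap I G y v) * ((z v : ℕ) : ZMod 2)) := by
      intro z
      rw [key_parity I G q hq x y z]
    rw [Finset.sum_congr rfl fun z _ => h2 z,
      sum_chi_eq I (Amap I G x + Amap I G y) (fun v => Lmap I G x v + Lmap I G y v)]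
    have hiff : ((fun v => Lmap I G x v + Lmap I G y v) = 0) ↔ Lmap I G x = Lmap I G y := by
      have hz : ∀ a b : ZMod 2, a + b = 0 ↔ a = b := by decide
      constructor
      · intro h; funext v; exact (hz _ _).mp (congrFun h v)
      · intro h; funext v; exact (hz _ _).mpr (congrFun h v)
    by_cases hL : Lmap I G x = Lmap I G y
    · rw [if_pos (hiff.mpr hL), if_pos hL, chi_add, hK]; ring
    · rw [if_neg (fun h => hL (hiff.mp h)), if_neg hL]; ring
  -- factorization M = B * Bᴴ
  set s : Finset ({i // i ∉ I} → ZMod 2) := Finset.image (Lmap I G) Finset.univ with hs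
  set B : Matrix ({i // i ∈ I} → Fin 2) {c // c ∈ s} ℂ := fun x c =>
    ((Real.sqrt K * chi (Amap I G x) * (if Lmap I G x = ↑c then 1 else 0) : ℝ) : ℂ) with hB
  have hsqrt : Real.sqrt K * Real.sqrt K = K := Real.mul_self_sqrt hKpos.le
  have hMB : M = B * Bᴴ := by
    ext x y
    rw [Matrix.mul_apply, hMxy x y]
    have hterm : ∀ j : {c // c ∈ s}, B x j * (Bᴴ) j y
        = (((Real.sqrt K * chi (Amap I G x) * (if Lmap I G x = ↑j then 1 else 0))
          * (Real.sqrt K * chi (Amap I G y) * (if Lmap I G y = ↑j then 1 else 0)) : ℝ) : ℂ) := by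
      intro j
      rw [Matrix.conjTranspose_apply]
      simp only [hB, Matrix.conjTranspose_apply, Complex.star_def, Complex.conj_ofReal,
        ← Complex.ofReal_mul]
    rw [Finset.sum_congr rfl (fun j _ => hterm j), ← Complex.ofReal_sum]
    congr 1
    by_cases hL : Lmap I G x = Lmap I G y
    · rw [if_pos hL, mul_one]
      rw [Finset.sum_eq_single (⟨Lmap I G x,
          by rw [hs]; exact Finset.mem_image_of_mem _ (Finset.mem_univ x)⟩ : {c // c ∈ s})]
      · rw [if_pos rfl, if_pos hL.symm, mul_one, mul_one]
        rw [show Real.sqrt K * chi (Amap I G x) * (Real.sqrt K * chi (Amap I G y))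
            = (Real.sqrt K * Real.sqrt K) * (chi (Amap I G x) * chi (Amap I G y)) from by ring,
          hsqrt]
      · intro j _ hj
        have hne : Lmap I G x ≠ ↑j := fun h => hj (Subtype.ext h.symm)
        rw [if_neg hne]; ring
      · intro h; exact absurd (Finset.mem_univ _) h
    · rw [if_neg hL, mul_zero]
      symm
      apply Finset.sum_eq_zero
      intro j _
      by_cases h1 : Lmap I G x = ↑j
      · have h2 : Lmap I G y ≠ ↑j := fun h2 => hL (h1.trans h2.symm)
        rw [if_neg h2]; ring
      · rw [if_neg h1]; ring
  have hherm : M.IsHermitian := hMB ▸ Matrix.isHermitian_mul_conjTranspose_self B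
  have hpsd : M.PosSemidef := hMB ▸ Matrix.posSemidef_self_mul_conjTranspose B
  set k := (G.edgeFinset.filter fun e => ∃ u v, u ∈ I ∧ v ∉ I ∧ e = s(u, v)).card with hk
  have hrank : M.rank ≤ 2 ^ k := by
    rw [hMB]
    calc (B * Bᴴ).rank ≤ B.rank := Matrix.rank_mul_le_left _ _
      _ ≤ Fintype.card {c // c ∈ s} := Matrix.rank_le_card_width B
      _ = s.card := Fintype.card_coe s
      _ ≤ 2 ^ k := card_Lmap_le I G
  -- the trace is one
  have htrace : M.trace = 1 := by
    have h0 : M.trace = ∑ x : {i // i ∈ I} → Fin 2, ∑ z : {i // i ∉ I} → Fin 2,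
        ψ (mrg I x z) * (starRingEnd ℂ) (ψ (mrg I x z)) := rfl
    have h1 : ∀ w : V → Fin 2, ψ w * (starRingEnd ℂ) (ψ w) = ((‖ψ w‖ ^ 2 : ℝ) : ℂ) := by
      intro w
      rw [Complex.mul_conj]
      norm_cast
      rw [Complex.normSq_eq_norm_sq]
    have hsplit : ∀ (F : (V → Fin 2) → ℂ),
        (∑ x : {i // i ∈ I} → Fin 2, ∑ z : {i // i ∉ I} → Fin 2, F (mrg I x z)) = ∑ w, F w := by
      intro F
      have h := Fintype.sum_equiv (Equiv.piEquivPiSubtypeProd (fun i => i ∈ I) (fun _ => Fin 2))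
        F (fun p => F (mrg I p.1 p.2))
        (fun w => congrArg F (funext fun i => by
          by_cases h : i ∈ I <;> simp [mrg, Equiv.piEquivPiSubtypeProd, h]))
      rw [h, Fintype.sum_prod_type]
    rw [h0, hsplit (fun w => ψ w * (starRingEnd ℂ) (ψ w)),
      Finset.sum_congr rfl fun w _ => h1 w, ← Complex.ofReal_sum, hunit]
    norm_num
  have hsum : ∑ i, hpsd.1.eigenvalues i = 1 := by
    have h2 := GAL.cast_sum_eig hpsd.1
    rw [htrace] at h2
    exact_mod_cast h2
  have hfin := GAL.entropy_le_logb hpsd hsum hrank Nat.one_le_two_pow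
  refine hfin.trans ?_
  have : ((2 ^ k : ℕ) : ℝ) = (2 : ℝ) ^ k := by push_cast; ring
  rw [this, Real.logb_pow, Real.logb_self_eq_one one_lt_two, mul_one]
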